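/- For every positive integer n and every complex number s: ∑_{k=1}^{n} C(s+n, k) · (-1)^{k-1}/k^2 = (H_n^2 + H_n^{(2)})/2 + s · ∑_{k=0}^{n-1} ( (-1)^k/(k+1) ) · C(s+k, k) · (H_n − H_k) / ((n−k) · binom(n, k)), where binom(n, k) is the ordinary binomial coefficient. -/

import Mathlib

/-- Generalized binomial coefficient `C(s,k) = s(s-1)⋯(s-k+1)/k!` for complex `s`. -/
noncomputable def genChoose (s : ℂ) (k : ℕ) : ℂ :=
  (∏ i ∈ Finset.range k, (s - i)) / (Nat.factorial k)

/-- The `n`-th harmonic number as a complex number. -/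
noncomputable def Hc (n : ℕ) : ℂ := ∑ i ∈ Finset.range n, 1 / (i + 1)

/-- The `n`-th generalized harmonic number of order 2 as a complex number. -/
noncomputable def H2c (n : ℕ) : ℂ := ∑ i ∈ Finset.range n, 1 / ((i : ℂ) + 1) ^ 2


open Finset Polynomial

lemma Hc_succ (n : ℕ) : Hc (n+1) = Hc n + 1/((n:ℂ)+1) := by
  simp [Hc, Finset.sum_range_succ]

lemma H2c_succ (n : ℕ) : H2c (n+1) = H2c n + 1/((n:ℂ)+1)^2 := by
  simp [H2c, Finset.sum_range_succ]

lemma fact_ne (k : ℕ) : ((Nat.factorial k : ℂ)) ≠ 0 := by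
  exact_mod_cast Nat.cast_ne_zero.mpr (Nat.factorial_ne_zero k)

lemma genChoose_succ (s : ℂ) (k : ℕ) :
    genChoose s (k+1) = genChoose s k * (s - k) / ((k:ℂ)+1) := by
  simp only [genChoose, Finset.prod_range_succ, Nat.factorial_succ]
  push_cast
  field_simp

lemma genChoose_nat (m k : ℕ) : genChoose (m : ℂ) k = (m.choose k : ℂ) := by
  induction k with
  | zero => simp [genChoose]
  | succ k ih =>
    rw [genChoose_succ, ih]
    rcases lt_trichotomy k m with h | h | h
    · have hnat : m.choose (k+1) * (k+1) = m.choose k * (m - k) := Nat.choose_succ_right_eq m k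
      have hcast : ((m - k : ℕ) : ℂ) = (m : ℂ) - k := by
        have := Nat.cast_sub (le_of_lt h) (R := ℂ)
        exact this
      have hC : ((m.choose (k+1) : ℂ)) * ((k:ℂ)+1) = (m.choose k : ℂ) * ((m:ℂ) - k) := by
        rw [← hcast]
        exact_mod_cast congrArg (fun x : ℕ => (x:ℂ)) hnat
      have hk1 : ((k:ℂ)+1) ≠ 0 := Nat.cast_add_one_ne_zero k
      field_simp
      linear_combination -hC
    · subst h
      simp [Nat.choose_succ_self]
    · have h1 : m.choose k = 0 := Nat.choose_eq_zero_of_lt h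
      have h2 : m.choose (k+1) = 0 := Nat.choose_eq_zero_of_lt (by omega)
      simp [h1, h2]

lemma prod_succ_shift (y : ℂ) (k : ℕ) :
    ∏ i ∈ Finset.range (k+1), (y + 1 - i) = (y+1) * ∏ i ∈ Finset.range k, (y - i) := by
  rw [Finset.prod_range_succ']
  have h1 : ∀ i ∈ Finset.range k, (y + 1 - ((i+1 : ℕ):ℂ)) = y - i := by
    intro i _; push_cast; ring
  rw [Finset.prod_congr rfl h1]
  push_cast; ring

lemma genChoose_neg (r k : ℕ) :
    genChoose ((k:ℂ) - r - 1) k = (-1:ℂ)^k * (r.choose k : ℂ) := by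
  have hprod : (∏ i ∈ Finset.range k, ((k:ℂ) - r - 1 - i))
      = (-1:ℂ)^k * ∏ i ∈ Finset.range k, ((r:ℂ) - i) := by
    rw [← Finset.prod_range_reflect]
    have h1 : ∀ j ∈ Finset.range k, ((k:ℂ) - r - 1 - ((k - 1 - j : ℕ):ℂ)) = (-1) * ((r:ℂ) - j) := by
      intro j hj
      simp only [Finset.mem_range] at hj
      have : ((k - 1 - j : ℕ) : ℂ) = (k:ℂ) - 1 - j := by
        have hle : 1 + j ≤ k := by omega
        push_cast [Nat.sub_sub, Nat.cast_sub hle]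
        ring
      rw [this]; ring
    rw [Finset.prod_congr rfl h1, Finset.prod_mul_distrib, Finset.prod_const]
    simp [Finset.card_range]
  rw [← genChoose_nat]
  simp only [genChoose, hprod]
  ring

lemma genChoose_pascal (x : ℂ) (k : ℕ) :
    genChoose (x+1) (k+1) = genChoose x (k+1) + genChoose x k := by
  have h1 : (∏ i ∈ Finset.range (k+1), (x + 1 - i))
      = (x+1) * ∏ i ∈ Finset.range k, (x - i) := prod_succ_shift x k
  have h2 : (∏ i ∈ Finset.range (k+1), (x - i))
      = (∏ i ∈ Finset.range k, (x - i)) * (x - k) := Finset.prod_range_succ _ _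
  simp only [genChoose, h1, h2, Nat.factorial_succ]
  have hk : ((k:ℂ)+1) ≠ 0 := Nat.cast_add_one_ne_zero k
  have hf := fact_ne k
  push_cast
  field_simp
  ring

lemma genChoose_shift (s : ℂ) (k : ℕ) :
    (s+1) * genChoose (s+1+(k:ℂ)) k = (s+(k:ℂ)+1) * genChoose (s+(k:ℂ)) k := by
  have key : (∏ i ∈ Finset.range k, (s+1+(k:ℂ) - i)) * (s+1)
      = (s+(k:ℂ)+1) * ∏ i ∈ Finset.range k, (s+(k:ℂ) - i) := by
    have hA : (∏ i ∈ Finset.range (k+1), ((s+(k:ℂ)) + 1 - i))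
        = (s+(k:ℂ)+1) * ∏ i ∈ Finset.range k, ((s+(k:ℂ)) - i) := prod_succ_shift (s+(k:ℂ)) k
    have hB : (∏ i ∈ Finset.range (k+1), ((s+(k:ℂ)) + 1 - i))
        = (∏ i ∈ Finset.range k, ((s+(k:ℂ)) + 1 - i)) * ((s+(k:ℂ)) + 1 - k) :=
      Finset.prod_range_succ _ _
    have hC : (∏ i ∈ Finset.range k, (s+1+(k:ℂ) - i))
        = ∏ i ∈ Finset.range k, ((s+(k:ℂ)) + 1 - i) :=
      Finset.prod_congr rfl (fun i _ => by ring)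
    rw [hC]
    have hE := hB.symm.trans hA
    linear_combination hE
  simp only [genChoose]
  field_simp
  linear_combination ((Nat.factorial k : ℂ))⁻¹ * key

lemma genChoose_step (s : ℂ) (k : ℕ) :
    s * genChoose (s+(k:ℂ)) k = ((k:ℂ)+1) * genChoose (s+(k:ℂ)) (k+1) := by
  rw [genChoose_succ]
  have hk : ((k:ℂ)+1) ≠ 0 := Nat.cast_add_one_ne_zero k
  field_simp
  ring

noncomputable def tt (n k : ℕ) : ℂ :=
  (Hc n - Hc k) / (((n:ℂ) - (k:ℂ)) * (n.choose k : ℂ))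

lemma choose_ne (n k : ℕ) (h : k ≤ n) : ((n.choose k : ℂ)) ≠ 0 := by
  exact_mod_cast Nat.cast_ne_zero.mpr (Nat.choose_pos h).ne'

lemma sub_ne (n k : ℕ) (h : k < n) : ((n:ℂ) - (k:ℂ)) ≠ 0 := by
  have hne : ((n:ℂ)) ≠ (k:ℂ) := by exact_mod_cast h.ne'
  exact sub_ne_zero.mpr hne

lemma ttP (n k : ℕ) (hk : k < n) : tt (n+1) k + tt (n+1) (k+1) = tt n k := by
  have hkn : k ≤ n := hk.le
  have ha : (n.choose k : ℂ) ≠ 0 := choose_ne n k hkn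
  have hn1 : ((n:ℂ)+1) ≠ 0 := Nat.cast_add_one_ne_zero n
  have hk1 : ((k:ℂ)+1) ≠ 0 := Nat.cast_add_one_ne_zero k
  have hnk : ((n:ℂ) - (k:ℂ)) ≠ 0 := sub_ne n k hk
  have hd1 : ((n:ℂ)+1) - (k:ℂ) ≠ 0 := by
    have := sub_ne (n+1) k (by omega)
    push_cast at this
    exact this
  have hc2 : ((n+1).choose (k+1) : ℂ) * ((k:ℂ)+1) = ((n:ℂ)+1) * (n.choose k : ℂ) := by
    have := congrArg (Nat.cast : ℕ → ℂ) (Nat.add_one_mul_choose_eq n k)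
    push_cast at this
    linear_combination -this
  have hc1 : ((n+1).choose k : ℂ) * (((n:ℂ)+1) - (k:ℂ)) = ((n:ℂ)+1) * (n.choose k : ℂ) := by
    have h1 : (n+1).choose (k+1) * (k+1) = (n+1).choose k * (n + 1 - k) :=
      Nat.choose_succ_right_eq (n+1) k
    have h1' := congrArg (Nat.cast : ℕ → ℂ) h1
    push_cast [Nat.cast_sub (by omega : k ≤ n+1)] at h1'
    linear_combination hc2 - h1'
  have hu : ((1:ℂ)+(n:ℂ)) * ((1:ℂ)+(n:ℂ))⁻¹ = 1 := mul_inv_cancel₀ (by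
    intro h; exact hn1 (by linear_combination h))
  have hv : ((1:ℂ)+(k:ℂ)) * ((1:ℂ)+(k:ℂ))⁻¹ = 1 := mul_inv_cancel₀ (by
    intro h; exact hk1 (by linear_combination h))
  have E1 : tt (n+1) k = ((Hc n - Hc k)*((n:ℂ)+1) + 1) / (((n:ℂ)+1)^2 * (n.choose k : ℂ)) := by
    unfold tt
    rw [Hc_succ]
    push_cast
    rw [div_eq_div_iff (mul_ne_zero hd1 (choose_ne (n+1) k (by omega)))
      (mul_ne_zero (pow_ne_zero 2 hn1) ha)]
    linear_combination (-(Hc n - Hc k)*((n:ℂ)+1) - 1) * hc1 +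
      ((n.choose k : ℂ)*((1:ℂ)+(n:ℂ))) * hu
  have E2 : tt (n+1) (k+1) = ((Hc n - Hc k)*((n:ℂ)+1)*((k:ℂ)+1) + (k:ℂ) - (n:ℂ)) /
      (((n:ℂ)-(k:ℂ)) * (((n:ℂ)+1)^2 * (n.choose k : ℂ))) := by
    unfold tt
    rw [Hc_succ n, Hc_succ k]
    push_cast
    rw [div_eq_div_iff (mul_ne_zero (by intro h; exact hnk (by linear_combination h))
        (choose_ne (n+1) (k+1) (by omega)))
      (mul_ne_zero hnk (mul_ne_zero (pow_ne_zero 2 hn1) ha))]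
    linear_combination
      (-((Hc n - Hc k)*((n:ℂ)+1)*((k:ℂ)+1) + (k:ℂ) - (n:ℂ)) * ((n:ℂ)-(k:ℂ)) * ((1:ℂ)+(k:ℂ))⁻¹) * hc2
      + (((Hc n - Hc k)*((n:ℂ)+1)*((k:ℂ)+1) + (k:ℂ) - (n:ℂ)) * ((n:ℂ)-(k:ℂ)) * ((n+1).choose (k+1):ℂ)) * hv
      + (((n:ℂ)-(k:ℂ))*((n:ℂ)+1)*(n.choose k:ℂ)) * hu
      - (((n:ℂ)-(k:ℂ))*((n:ℂ)+1)*(n.choose k:ℂ)*((Hc n - Hc k)*((n:ℂ)+1)+1)) * hv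
  rw [E1, E2]
  unfold tt
  rw [div_add_div _ _ (mul_ne_zero (pow_ne_zero 2 hn1) ha)
    (mul_ne_zero hnk (mul_ne_zero (pow_ne_zero 2 hn1) ha)),
    div_eq_div_iff (mul_ne_zero (mul_ne_zero (pow_ne_zero 2 hn1) ha)
      (mul_ne_zero hnk (mul_ne_zero (pow_ne_zero 2 hn1) ha))) (mul_ne_zero hnk ha)]
  ring
lemma ttG (r : ℕ) : ∀ (m n : ℕ), m + r < n →
    ∑ k ∈ Finset.range (r+1), (r.choose k : ℂ) * tt n (m+k) = tt (n-r) m := by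
  induction r with
  | zero => intro m n h; simp
  | succ r ih =>
    intro m n h
    have e1 : ∑ k ∈ Finset.range (r+2), ((r+1).choose k : ℂ) * tt n (m+k)
        = (∑ k ∈ Finset.range (r+1), ((r+1).choose (k+1) : ℂ) * tt n (m+(k+1)))
          + ((r+1).choose 0 : ℂ) * tt n (m+0) :=
      Finset.sum_range_succ' _ _
    have e2 : ∀ k ∈ Finset.range (r+1), ((r+1).choose (k+1) : ℂ) * tt n (m+(k+1))
        = (r.choose k : ℂ) * tt n ((m+1)+k) + (r.choose (k+1) : ℂ) * tt n (m+(k+1)) := by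
      intro k _
      have : (r+1).choose (k+1) = r.choose k + r.choose (k+1) := Nat.choose_succ_succ r k
      rw [this]
      push_cast
      rw [show m+(k+1) = (m+1)+k by omega]
      ring
    have e3 : (∑ k ∈ Finset.range (r+1), (r.choose (k+1) : ℂ) * tt n (m+(k+1)))
          + ((r+1).choose 0 : ℂ) * tt n (m+0)
        = ∑ k ∈ Finset.range (r+1), (r.choose k : ℂ) * tt n (m+k) := by
      have h4 : ∑ k ∈ Finset.range (r+2), (r.choose k : ℂ) * tt n (m+k)
          = (∑ k ∈ Finset.range (r+1), (r.choose (k+1) : ℂ) * tt n (m+(k+1)))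
            + (r.choose 0 : ℂ) * tt n (m+0) := Finset.sum_range_succ' _ _
      have h5 : ∑ k ∈ Finset.range (r+2), (r.choose k : ℂ) * tt n (m+k)
          = (∑ k ∈ Finset.range (r+1), (r.choose k : ℂ) * tt n (m+k))
            + (r.choose (r+1) : ℂ) * tt n (m+(r+1)) := Finset.sum_range_succ _ _
      rw [Nat.choose_succ_self] at h5
      simp only [Nat.choose_zero_right, Nat.cast_zero, Nat.cast_one, zero_mul, one_mul,
        add_zero, Nat.add_zero] at h4 h5 ⊢
      rw [← h4, h5]
    rw [e1, Finset.sum_congr rfl e2, Finset.sum_add_distrib, add_assoc, e3,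
      ih (m+1) n (by omega), ih m n (by omega)]
    have hP := ttP (n-(r+1)) m (by omega)
    rw [show n-(r+1)+1 = n-r by omega] at hP
    rw [← hP]
    ring
lemma alt_choose_sum (M : ℕ) (hM : M ≠ 0) :
    ∑ i ∈ Finset.range (M+1), (-1:ℂ)^i * (M.choose i : ℂ) = 0 := by
  have := Int.alternating_sum_range_choose_of_ne hM
  have h2 := congrArg (Int.cast : ℤ → ℂ) this
  push_cast at h2
  convert h2 using 2

lemma L5' (m : ℕ) :
    ∑ j ∈ Finset.range (m+1), (-1:ℂ)^j * (m.choose j : ℂ) / ((j:ℂ)+1) = 1/((m:ℂ)+1) := by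
  have hm1 : ((m:ℂ)+1) ≠ 0 := Nat.cast_add_one_ne_zero m
  have key : ∀ j ∈ Finset.range (m+1),
      (-1:ℂ)^j * (m.choose j : ℂ) / ((j:ℂ)+1)
      = -(1/((m:ℂ)+1)) * ((-1:ℂ)^(j+1) * ((m+1).choose (j+1) : ℂ)) := by
    intro j _
    have hj1 : ((j:ℂ)+1) ≠ 0 := Nat.cast_add_one_ne_zero j
    have hc : ((m+1).choose (j+1) : ℂ) * ((j:ℂ)+1) = ((m:ℂ)+1) * (m.choose j : ℂ) := by
      have := congrArg (Nat.cast : ℕ → ℂ) (Nat.add_one_mul_choose_eq m j)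
      push_cast at this
      linear_combination -this
    rw [div_eq_iff hj1]
    have : (-1:ℂ)^(j+1) = -(-1:ℂ)^j := by ring
    rw [this]
    field_simp
    linear_combination (-1:ℂ) * hc
  rw [Finset.sum_congr rfl key, ← Finset.mul_sum]
  have expand : ∑ j ∈ Finset.range (m+1), (-1:ℂ)^(j+1) * ((m+1).choose (j+1) : ℂ)
      = (∑ i ∈ Finset.range (m+2), (-1:ℂ)^i * ((m+1).choose i : ℂ)) - 1 := by
    rw [Finset.sum_range_succ' (fun i => (-1:ℂ)^i * ((m+1).choose i : ℂ)) (m+1)]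
    simp
  rw [expand, alt_choose_sum (m+1) (by omega)]
  field_simp
  norm_num
lemma Icc_to_range (N : ℕ) (f : ℕ → ℂ) :
    ∑ k ∈ Finset.Icc 1 N, f k = ∑ j ∈ Finset.range N, f (j+1) := by
  rw [← Finset.Ico_add_one_right_eq_Icc, Finset.sum_Ico_eq_sum_range]
  exact Finset.sum_congr (by norm_num) fun j _ => by rw [add_comm]

lemma L5 (m : ℕ) :
    ∑ k ∈ Finset.Icc 1 m, (-1:ℂ)^(k-1) * (m.choose k : ℂ) / (k:ℂ) = Hc m := by
  induction m with
  | zero => simp [Hc]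
  | succ m ih =>
    have hsplit : ∀ k ∈ Finset.Icc 1 (m+1),
        (-1:ℂ)^(k-1) * ((m+1).choose k : ℂ) / (k:ℂ)
        = (-1:ℂ)^(k-1) * (m.choose k : ℂ) / (k:ℂ)
          + (-1:ℂ)^(k-1) * (m.choose (k-1) : ℂ) / (k:ℂ) := by
      intro k hk
      simp only [Finset.mem_Icc] at hk
      obtain ⟨j, rfl⟩ : ∃ j, k = j + 1 := ⟨k - 1, by omega⟩
      rw [Nat.choose_succ_succ m j]
      push_cast
      ring
    rw [Finset.sum_congr rfl hsplit, Finset.sum_add_distrib]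
    have h1 : ∑ k ∈ Finset.Icc 1 (m+1), (-1:ℂ)^(k-1) * (m.choose k : ℂ) / (k:ℂ)
        = ∑ k ∈ Finset.Icc 1 m, (-1:ℂ)^(k-1) * (m.choose k : ℂ) / (k:ℂ) := by
      rw [Icc_to_range (m+1), Finset.sum_range_succ, Icc_to_range m]
      simp [Nat.choose_succ_self]
    have h2 : ∑ k ∈ Finset.Icc 1 (m+1), (-1:ℂ)^(k-1) * (m.choose (k-1) : ℂ) / (k:ℂ)
        = ∑ j ∈ Finset.range (m+1), (-1:ℂ)^j * (m.choose j : ℂ) / ((j:ℂ)+1) := by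
      rw [Icc_to_range (m+1)]
      apply Finset.sum_congr rfl
      intro j _
      simp only [Nat.add_sub_cancel]
      push_cast
      ring
    rw [h1, h2, ih, L5', Hc_succ]

lemma L3 (m : ℕ) :
    ∑ j ∈ Finset.range (m+1), (-1:ℂ)^j * (m.choose j : ℂ) / ((j:ℂ)+1)^2
      = Hc (m+1) / ((m:ℂ)+1) := by
  have hm1 : ((m:ℂ)+1) ≠ 0 := Nat.cast_add_one_ne_zero m
  have key : ∀ j ∈ Finset.range (m+1),
      (-1:ℂ)^j * (m.choose j : ℂ) / ((j:ℂ)+1)^2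
      = (1/((m:ℂ)+1)) * ((-1:ℂ)^((j+1)-1) * (((m+1).choose (j+1)) : ℂ) / ((j:ℂ)+1)) := by
    intro j _
    have hj1 : ((j:ℂ)+1) ≠ 0 := Nat.cast_add_one_ne_zero j
    have hc : ((m+1).choose (j+1) : ℂ) * ((j:ℂ)+1) = ((m:ℂ)+1) * (m.choose j : ℂ) := by
      have := congrArg (Nat.cast : ℕ → ℂ) (Nat.add_one_mul_choose_eq m j)
      push_cast at this
      linear_combination -this
    simp only [Nat.add_sub_cancel]
    field_simp
    linear_combination (-1:ℂ) * hc
  rw [Finset.sum_congr rfl key, ← Finset.mul_sum]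
  have h2 : ∑ j ∈ Finset.range (m+1), (-1:ℂ)^((j+1)-1) * (((m+1).choose (j+1)) : ℂ) / ((j:ℂ)+1)
      = ∑ k ∈ Finset.Icc 1 (m+1), (-1:ℂ)^(k-1) * ((m+1).choose k : ℂ) / (k:ℂ) := by
    rw [Icc_to_range (m+1)]
    apply Finset.sum_congr rfl
    intro j _
    push_cast
    ring
  rw [h2, L5 (m+1)]
  ring
lemma L4 (n : ℕ) :
    ∑ k ∈ Finset.Icc 1 n, (-1:ℂ)^(k-1) * (n.choose k : ℂ) / (k:ℂ)^2
      = (Hc n^2 + H2c n)/2 := by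
  induction n with
  | zero => simp [Hc, H2c]
  | succ n ih =>
    have hsplit : ∀ k ∈ Finset.Icc 1 (n+1),
        (-1:ℂ)^(k-1) * ((n+1).choose k : ℂ) / (k:ℂ)^2
        = (-1:ℂ)^(k-1) * (n.choose k : ℂ) / (k:ℂ)^2
          + (-1:ℂ)^(k-1) * (n.choose (k-1) : ℂ) / (k:ℂ)^2 := by
      intro k hk
      simp only [Finset.mem_Icc] at hk
      obtain ⟨j, rfl⟩ : ∃ j, k = j + 1 := ⟨k - 1, by omega⟩
      rw [Nat.choose_succ_succ n j]
      push_cast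
      ring
    rw [Finset.sum_congr rfl hsplit, Finset.sum_add_distrib]
    have h1 : ∑ k ∈ Finset.Icc 1 (n+1), (-1:ℂ)^(k-1) * (n.choose k : ℂ) / (k:ℂ)^2
        = ∑ k ∈ Finset.Icc 1 n, (-1:ℂ)^(k-1) * (n.choose k : ℂ) / (k:ℂ)^2 := by
      rw [Icc_to_range (n+1), Finset.sum_range_succ, Icc_to_range n]
      simp [Nat.choose_succ_self]
    have h2 : ∑ k ∈ Finset.Icc 1 (n+1), (-1:ℂ)^(k-1) * (n.choose (k-1) : ℂ) / (k:ℂ)^2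
        = ∑ j ∈ Finset.range (n+1), (-1:ℂ)^j * (n.choose j : ℂ) / ((j:ℂ)+1)^2 := by
      rw [Icc_to_range (n+1)]
      apply Finset.sum_congr rfl
      intro j _
      push_cast
      ring
    rw [h1, h2, ih, L3, Hc_succ, H2c_succ]
    have hn1 : ((n:ℂ)+1) ≠ 0 := Nat.cast_add_one_ne_zero n
    field_simp
    ring
noncomputable def gp (a : ℂ) (k : ℕ) : Polynomial ℂ :=
  Polynomial.C (1/(k.factorial : ℂ)) *
    ∏ i ∈ Finset.range k, (Polynomial.X + Polynomial.C (a - i))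

lemma gp_eval (a x : ℂ) (k : ℕ) : (gp a k).eval x = genChoose (x + a) k := by
  have h : ∀ i ∈ Finset.range k, x + (a - (i:ℂ)) = x + a - i := fun i _ => by ring
  simp only [gp, Polynomial.eval_mul, Polynomial.eval_C, Polynomial.eval_prod,
    Polynomial.eval_add, Polynomial.eval_X, genChoose]
  rw [Finset.prod_congr rfl h]
  ring

lemma gp_natDegree (a : ℂ) (k : ℕ) : (gp a k).natDegree ≤ k := by
  have h1 : (∏ i ∈ Finset.range k, (Polynomial.X + Polynomial.C (a - i))).natDegree ≤ k := by
    refine le_trans (Polynomial.natDegree_prod_le (Finset.range k)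
      (fun i => Polynomial.X + Polynomial.C (a - (i:ℂ)))) ?_
    refine le_trans (Finset.sum_le_sum
      (fun i _ => le_of_eq (Polynomial.natDegree_X_add_C _))) ?_
    simp
  exact le_trans (Polynomial.natDegree_C_mul_le _ _) h1

lemma lemA (n : ℕ) (hn : 0 < n) (u : ℂ) :
    ∑ j ∈ Finset.range n, (-1:ℂ)^j * genChoose u j / ((j:ℂ)+1)^2
      = ∑ k ∈ Finset.range n, (-1:ℂ)^k * genChoose (u - n + k) k * tt n k := by
  set pL : Polynomial ℂ :=
    ∑ j ∈ Finset.range n, Polynomial.C ((-1:ℂ)^j / ((j:ℂ)+1)^2) * gp 0 j with hpL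
  set pR : Polynomial ℂ :=
    ∑ k ∈ Finset.range n, Polynomial.C ((-1:ℂ)^k * tt n k) * gp ((k:ℂ) - n) k with hpR
  have evalL : ∀ x : ℂ, pL.eval x
      = ∑ j ∈ Finset.range n, (-1:ℂ)^j * genChoose x j / ((j:ℂ)+1)^2 := by
    intro x
    rw [hpL, Polynomial.eval_finset_sum]
    refine Finset.sum_congr rfl fun j _ => ?_
    rw [Polynomial.eval_mul, Polynomial.eval_C, gp_eval, add_zero]
    ring
  have evalR : ∀ x : ℂ, pR.eval x
      = ∑ k ∈ Finset.range n, (-1:ℂ)^k * genChoose (x - n + k) k * tt n k := by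
    intro x
    rw [hpR, Polynomial.eval_finset_sum]
    refine Finset.sum_congr rfl fun k _ => ?_
    rw [Polynomial.eval_mul, Polynomial.eval_C, gp_eval,
      show x + ((k:ℂ) - n) = x - n + k from by ring]
    ring
  have hroot : ∀ m : ℕ, m < n → (pL - pR).eval (m:ℂ) = 0 := by
    intro m hm
    rw [Polynomial.eval_sub, sub_eq_zero, evalL, evalR]
    set r := n - 1 - m with hr
    -- LHS
    have hLHS : ∑ j ∈ Finset.range n, (-1:ℂ)^j * genChoose (m:ℂ) j / ((j:ℂ)+1)^2
        = Hc (m+1) / ((m:ℂ)+1) := by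
      have hgen : ∀ j ∈ Finset.range n, (-1:ℂ)^j * genChoose (m:ℂ) j / ((j:ℂ)+1)^2
          = (-1:ℂ)^j * (m.choose j : ℂ) / ((j:ℂ)+1)^2 := fun j _ => by rw [genChoose_nat]
      rw [Finset.sum_congr rfl hgen, ← L3 m]
      symm
      apply Finset.sum_subset (Finset.range_subset_range.mpr (by omega))
      intro j _ hj
      simp only [Finset.mem_range, not_lt] at hj
      rw [Nat.choose_eq_zero_of_lt (by omega)]
      simp
    have hterm : ∀ k ∈ Finset.range n,
        (-1:ℂ)^k * genChoose ((m:ℂ) - n + k) k * tt n k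
        = (r.choose k : ℂ) * tt n k := by
      intro k _
      have harg : (m:ℂ) - n + k = (k:ℂ) - r - 1 := by
        have : ((r:ℕ):ℂ) = (n:ℂ) - 1 - m := by
          rw [hr]
          push_cast [Nat.cast_sub (by omega : m ≤ n - 1), Nat.cast_sub (by omega : 1 ≤ n)]
          ring
        rw [this]; ring
      rw [harg, genChoose_neg]
      have h11 : (-1:ℂ)^k * (-1:ℂ)^k = 1 := by rw [← mul_pow]; norm_num
      linear_combination ((r.choose k : ℂ) * tt n k) * h11
    have hRHS : ∑ k ∈ Finset.range n, (-1:ℂ)^k * genChoose ((m:ℂ) - n + k) k * tt n k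
        = Hc (m+1) / ((m:ℂ)+1) := by
      rw [Finset.sum_congr rfl hterm]
      have htrunc : ∑ k ∈ Finset.range n, (r.choose k : ℂ) * tt n k
          = ∑ k ∈ Finset.range (r+1), (r.choose k : ℂ) * tt n k := by
        symm
        apply Finset.sum_subset (Finset.range_subset_range.mpr (by omega))
        intro k _ hk
        simp only [Finset.mem_range, not_lt] at hk
        rw [Nat.choose_eq_zero_of_lt (by omega)]
        simp
      have hG : ∑ k ∈ Finset.range (r+1), (r.choose k : ℂ) * tt n (0+k) = tt (n-r) 0 :=
        ttG r 0 n (by omega)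
      simp only [Nat.zero_add] at hG
      rw [htrunc, hG, show n - r = m + 1 from by omega]
      simp only [tt, Hc]
      push_cast
      simp
    rw [hLHS, hRHS]
  have hq : pL - pR = 0 := by
    apply Polynomial.eq_zero_of_natDegree_lt_card_of_eval_eq_zero' (pL - pR)
      ((Finset.range n).image (Nat.cast : ℕ → ℂ))
    · intro x hx
      simp only [Finset.mem_image, Finset.mem_range] at hx
      obtain ⟨m, hm, rfl⟩ := hx
      exact hroot m hm
    · rw [Finset.card_image_of_injective _ Nat.cast_injective, Finset.card_range]
      have hdeg : ∀ (p : Polynomial ℂ), p = pL ∨ p = pR → p.natDegree ≤ n - 1 := by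
        rintro p (rfl | rfl)
        · exact Polynomial.natDegree_sum_le_of_forall_le _ _ fun j hj =>
            le_trans (Polynomial.natDegree_C_mul_le _ _)
              (le_trans (gp_natDegree _ _) (by simp only [Finset.mem_range] at hj; omega))
        · exact Polynomial.natDegree_sum_le_of_forall_le _ _ fun k hk =>
            le_trans (Polynomial.natDegree_C_mul_le _ _)
              (le_trans (gp_natDegree _ _) (by simp only [Finset.mem_range] at hk; omega))
      have := Polynomial.natDegree_sub_le pL pR
      have h1 := hdeg pL (Or.inl rfl)
      have h2 := hdeg pR (Or.inr rfl)
      omega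
  have hpq : pL = pR := sub_eq_zero.mp hq
  have h := congrArg (Polynomial.eval u) hpq
  rw [evalL, evalR] at h
  exact h
theorem stmt_8 (n : ℕ) (hn : 0 < n) (s : ℂ) :
    ∑ k ∈ Finset.Icc 1 n, genChoose (s + n) k * (-1 : ℂ) ^ (k - 1) / (k : ℂ) ^ 2 =
      (Hc n ^ 2 + H2c n) / 2 + s * ∑ k ∈ Finset.range n,
        (-1 : ℂ) ^ k / ((k : ℂ) + 1) * genChoose (s + k) k *
          (Hc n - Hc k) / (((n : ℂ) - k) * (Nat.choose n k : ℂ)) := by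
  -- define the two polynomials
  set c0 : ℂ := (Hc n ^ 2 + H2c n) / 2 with hc0
  set pf : Polynomial ℂ :=
    ∑ k ∈ Finset.Icc 1 n, Polynomial.C ((-1:ℂ)^(k-1) / (k:ℂ)^2) * gp (n:ℂ) k with hpf
  set pg : Polynomial ℂ := Polynomial.C c0 +
    Polynomial.X * ∑ k ∈ Finset.range n,
      Polynomial.C ((-1:ℂ)^k / ((k:ℂ)+1) * tt n k) * gp (k:ℂ) k with hpg
  have evalf : ∀ x : ℂ, pf.eval x
      = ∑ k ∈ Finset.Icc 1 n, genChoose (x + n) k * (-1:ℂ)^(k-1) / (k:ℂ)^2 := by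
    intro x
    rw [hpf, Polynomial.eval_finset_sum]
    refine Finset.sum_congr rfl fun k _ => ?_
    rw [Polynomial.eval_mul, Polynomial.eval_C, gp_eval]
    ring
  have evalg : ∀ x : ℂ, pg.eval x
      = c0 + x * ∑ k ∈ Finset.range n,
          (-1 : ℂ) ^ k / ((k : ℂ) + 1) * genChoose (x + k) k *
            (Hc n - Hc k) / (((n : ℂ) - k) * (Nat.choose n k : ℂ)) := by
    intro x
    rw [hpg, Polynomial.eval_add, Polynomial.eval_C, Polynomial.eval_mul, Polynomial.eval_X,
      Polynomial.eval_finset_sum]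
    congr 1
    congr 1
    refine Finset.sum_congr rfl fun k _ => ?_
    rw [Polynomial.eval_mul, Polynomial.eval_C, gp_eval, tt]
    ring
  -- difference identity for f
  have hDf : ∀ x : ℂ,
      pf.eval (x+1) - pf.eval x
        = ∑ j ∈ Finset.range n, (-1:ℂ)^j * genChoose (x + n) j / ((j:ℂ)+1)^2 := by
    intro x
    rw [evalf, evalf, ← Finset.sum_sub_distrib, Icc_to_range]
    refine Finset.sum_congr rfl fun j _ => ?_
    have hp : genChoose (x + 1 + n) (j+1) = genChoose (x + n) (j+1) + genChoose (x + n) j := by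
      rw [show x + 1 + (n:ℂ) = (x + n) + 1 from by ring]
      exact genChoose_pascal (x + (n:ℂ)) j
    rw [hp]
    have : ((-1:ℂ))^(j+1-1) = (-1:ℂ)^j := by norm_num
    push_cast
    ring
  -- difference identity for g
  have hDg : ∀ x : ℂ,
      pg.eval (x+1) - pg.eval x
        = ∑ k ∈ Finset.range n, (-1:ℂ)^k * genChoose (x + k) k * tt n k := by
    intro x
    rw [evalg, evalg]
    have hterm : ∀ k ∈ Finset.range n,
        ((-1 : ℂ) ^ k / ((k : ℂ) + 1) * genChoose (x + 1 + k) k *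
            (Hc n - Hc k) / (((n : ℂ) - k) * (Nat.choose n k : ℂ))) * (x+1)
          - ((-1 : ℂ) ^ k / ((k : ℂ) + 1) * genChoose (x + k) k *
            (Hc n - Hc k) / (((n : ℂ) - k) * (Nat.choose n k : ℂ))) * x
        = (-1:ℂ)^k * genChoose (x + k) k * tt n k := by
      intro k hk
      simp only [Finset.mem_range] at hk
      have hsh := genChoose_shift x k
      have hk1 : ((k:ℂ)+1) ≠ 0 := Nat.cast_add_one_ne_zero k
      rw [tt]
      have hv : ((k:ℂ)+1) * ((k:ℂ)+1)⁻¹ = 1 := mul_inv_cancel₀ hk1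
      linear_combination
        ((-1:ℂ)^k * (Hc n - Hc k) * (((n:ℂ)-(k:ℂ))*(n.choose k:ℂ))⁻¹ * ((k:ℂ)+1)⁻¹) * hsh
        + ((-1:ℂ)^k * (Hc n - Hc k) * (((n:ℂ)-(k:ℂ))*(n.choose k:ℂ))⁻¹ * genChoose (x+(k:ℂ)) k) * hv
    calc c0 + (x+1) * ∑ k ∈ Finset.range n,
          (-1 : ℂ) ^ k / ((k : ℂ) + 1) * genChoose (x + 1 + k) k *
            (Hc n - Hc k) / (((n : ℂ) - k) * (Nat.choose n k : ℂ))
        - (c0 + x * ∑ k ∈ Finset.range n,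
          (-1 : ℂ) ^ k / ((k : ℂ) + 1) * genChoose (x + k) k *
            (Hc n - Hc k) / (((n : ℂ) - k) * (Nat.choose n k : ℂ)))
        = ∑ k ∈ Finset.range n,
            (((-1 : ℂ) ^ k / ((k : ℂ) + 1) * genChoose (x + 1 + k) k *
              (Hc n - Hc k) / (((n : ℂ) - k) * (Nat.choose n k : ℂ))) * (x+1)
            - ((-1 : ℂ) ^ k / ((k : ℂ) + 1) * genChoose (x + k) k *
              (Hc n - Hc k) / (((n : ℂ) - k) * (Nat.choose n k : ℂ))) * x) := by
          rw [Finset.sum_sub_distrib, ← Finset.sum_mul, ← Finset.sum_mul]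
          ring
      _ = ∑ k ∈ Finset.range n, (-1:ℂ)^k * genChoose (x + k) k * tt n k :=
          Finset.sum_congr rfl hterm
  -- the combined difference is zero
  have hD : ∀ x : ℂ, pf.eval (x+1) - pf.eval x = pg.eval (x+1) - pg.eval x := by
    intro x
    rw [hDf, hDg]
    rw [lemA n hn (x + n)]
    refine Finset.sum_congr rfl fun k _ => ?_
    rw [show x + (n:ℂ) - n + k = x + k from by ring]
  -- agreement at 0
  have h0 : pf.eval 0 = pg.eval 0 := by
    rw [evalf, evalg]
    have : ∀ k ∈ Finset.Icc 1 n, genChoose ((0:ℂ) + n) k * (-1:ℂ)^(k-1) / (k:ℂ)^2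
        = (-1:ℂ)^(k-1) * (n.choose k : ℂ) / (k:ℂ)^2 := by
      intro k _
      rw [zero_add, genChoose_nat]
      ring
    rw [Finset.sum_congr rfl this, L4 n]
    simp [hc0]
  -- agreement at all naturals
  have hNat : ∀ m : ℕ, pf.eval (m:ℂ) = pg.eval (m:ℂ) := by
    intro m
    induction m with
    | zero => simpa using h0
    | succ m ih =>
      have := hD (m:ℂ)
      push_cast
      linear_combination this + ih
  -- polynomials agree
  have hpq : pf = pg := by
    apply Polynomial.eq_of_infinite_eval_eq
    apply Set.infinite_of_injective_forall_mem (f := (Nat.cast : ℕ → ℂ)) Nat.cast_injective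
    intro m
    exact hNat m
  have h := congrArg (Polynomial.eval s) hpq
  rw [evalf, evalg] at h
  exact h
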